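/- Let R be an integral domain of characteristic p and let g = ∑_{i=0}^{∞} B_i τ^i with B_i ∈ Mat_{1×d}(R) satisfy g ∘ φ_E(z) = π·g, where φ_E(z) = ∑_{j=0}^{sf} P_j τ^j with P_0 = π·I and P_{sf} invertible, and where R is a π-adic DVR. Then g = 0. (In other words, an elliptic Anderson module admits no nonzero A-linear characters to the additive group: X(E) = 0.) -/

import Mathlib

open Finset

/-- Let `R` be a `π`-adically complete discrete valuation
ring of characteristic `p` and let `g = ∑ Bᵢ τ^i` be a twisted power series
with row-vector coefficients `Bᵢ ∈ Mat_{1×d}(R)` tending to `0` `π`-adically,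
satisfying `g ∘ φ_E(z) = π·g` where `φ_E(z) = ∑_{j=0}^{sf} P_j τ^j` with
`P₀ = π·I` and `P_{sf}` invertible.  Then `g = 0`: an elliptic Anderson
module admits no nonzero `A`-linear character to the additive group,
i.e. `X(E) = 0`. -/
theorem character_eq_zero
    {R : Type*} [CommRing R] [IsDomain R] [IsDiscreteValuationRing R]
    (p : ℕ) [Fact p.Prime] [CharP R p]
    (h : ℕ) (hh : 0 < h) (q : ℕ) (hq : q = p ^ h)
    (π : R) (hπ : Irreducible π)
    (hcomplete : IsAdicComplete (Ideal.span {π}) R)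
    (d sf : ℕ) (hsf : 1 ≤ sf) (hd : 1 ≤ d)
    (P : ℕ → Matrix (Fin d) (Fin d) R)
    (hP0 : P 0 = π • (1 : Matrix (Fin d) (Fin d) R))
    (hPsf : IsUnit (P sf))
    (B : ℕ → Matrix (Fin 1) (Fin d) R)
    -- the coefficients `Bᵢ` tend to `0` `π`-adically
    (hconv : ∀ n : ℕ, ∃ N : ℕ, ∀ i ≥ N, ∀ a b,
        B i a b ∈ (Ideal.span {π} : Ideal R) ^ n)
    -- `g ∘ φ_E(z) = π · g`, comparing coefficients of `τ^i`
    (hcomm : ∀ i : ℕ, π • B i =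
        ∑ j ∈ range (sf + 1),
          if j ≤ i then B (i - j) * (P j).map (fun x => x ^ q ^ (i - j)) else 0) :
    ∀ i, B i = 0 := by

  -- Key claim: every entry of every `B i` lies in every power of `(π)`.
  have key : ∀ n : ℕ, ∀ i : ℕ, ∀ a b, B i a b ∈ (Ideal.span {π} : Ideal R) ^ n := by
    intro n
    set J : Ideal R := (Ideal.span {π} : Ideal R) ^ n with hJ
    obtain ⟨N, hN⟩ := hconv n
    -- closure of `J`-entry matrices under right multiplication
    have hmulR : ∀ (X : Matrix (Fin 1) (Fin d) R) (Y : Matrix (Fin d) (Fin d) R),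
        (∀ a b, X a b ∈ J) → ∀ a b, (X * Y) a b ∈ J := by
      intro X Y hX a b
      rw [Matrix.mul_apply]
      exact J.sum_mem fun c _ => J.mul_mem_right _ (hX a c)
    -- the Frobenius-twisted leading coefficient is a unit
    have hfr : ∀ i : ℕ, (fun x : R => x ^ q ^ i) = ⇑(iterateFrobenius R p (h * i)) := by
      intro i
      funext x
      rw [iterateFrobenius_def, hq, ← pow_mul]
    have hM : ∀ i : ℕ, IsUnit ((P sf).map (fun x : R => x ^ q ^ i)) := by
      intro i
      have := hPsf.map (RingHom.mapMatrix (iterateFrobenius R p (h * i))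
        (m := Fin d))
      rwa [RingHom.mapMatrix_apply, ← hfr i] at this
    -- downward induction on the distance to `N`
    have aux : ∀ k : ℕ, ∀ i : ℕ, N ≤ i + k → ∀ a b, B i a b ∈ J := by
      intro k
      induction k with
      | zero => intro i hi a b; exact hN i (by omega) a b
      | succ k IH =>
        intro i hi a b
        by_cases hiN : N ≤ i + k
        · exact IH i hiN a b
        -- use the functional equation at index `i + sf`
        have hc := hcomm (i + sf)
        have hrw : ∑ j ∈ range (sf + 1),
            (if j ≤ i + sf then B (i + sf - j) *
              (P j).map (fun x => x ^ q ^ (i + sf - j)) else 0)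
            = ∑ j ∈ range (sf + 1),
              B (i + sf - j) * (P j).map (fun x => x ^ q ^ (i + sf - j)) :=
          Finset.sum_congr rfl fun j hj => if_pos (by
            have := Finset.mem_range.mp hj; omega)
        rw [hrw, Finset.sum_range_succ] at hc
        have hidx : i + sf - sf = i := by omega
        rw [hidx] at hc
        -- entries of `B i * M` lie in `J`
        have hBiM : ∀ a b, (B i * (P sf).map (fun x => x ^ q ^ i)) a b ∈ J := by
          intro a b
          have heq : B i * (P sf).map (fun x => x ^ q ^ i)
              = π • B (i + sf) - ∑ j ∈ range sf,
                B (i + sf - j) * (P j).map (fun x => x ^ q ^ (i + sf - j)) := by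
            rw [hc]; exact (add_sub_cancel_left _ _).symm
          rw [heq]
          have h1 : (π • B (i + sf)) a b ∈ J := by
            rw [Matrix.smul_apply, smul_eq_mul]
            exact J.mul_mem_left _ (IH (i + sf) (by omega) a b)
          have h2 : (∑ j ∈ range sf,
              B (i + sf - j) * (P j).map (fun x => x ^ q ^ (i + sf - j))) a b ∈ J := by
            rw [Matrix.sum_apply]
            refine J.sum_mem fun j hj => ?_
            have hj' : j < sf := Finset.mem_range.mp hj
            refine hmulR _ _ (fun a b => ?_) a b
            exact IH (i + sf - j) (by omega) a b
          exact Submodule.sub_mem J h1 h2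
        -- cancel the unit on the right
        obtain ⟨u, hu⟩ := hM i
        have hBi : B i = (B i * (P sf).map (fun x => x ^ q ^ i)) *
            (↑u⁻¹ : Matrix (Fin d) (Fin d) R) := by
          rw [Matrix.mul_assoc, ← hu, Units.mul_inv, Matrix.mul_one]
        rw [hBi]
        exact hmulR _ _ hBiM a b
    intro i a b
    exact aux N i (by omega) a b
  -- conclude from `π`-adic separation
  intro i
  ext a b
  rw [Matrix.zero_apply]
  refine hcomplete.toIsHausdorff.haus (B i a b) fun n => ?_
  rw [SModEq.zero]
  have h1 : (1 : R) ∈ (⊤ : Submodule R R) := Submodule.mem_top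
  simpa using Submodule.smul_mem_smul (key n i a b) h1
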